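/- arXiv:1205.6971 — 2 statements merged into one kernel-verified Lean document; each statement's English description precedes it below -/
import Mathlib

section
/- Let $I$ be a normal monomial ideal in $S=\mathbb{K}[x_1,\dots,x_n]$, i.e., all powers of $I$ are integrally closed. Then for every integer $k\geq 1$, $\mathrm{sdepth}(I^k)\leq \mathrm{sdepth}(I)$ and $\mathrm{sdepth}(S/I^k)\leq \mathrm{sdepth}(S/I)$. -/
open MvPolynomial

noncomputable section

/-- `I` is a monomial ideal: it is generated by a set of monomials. -/
def IsMonomialIdeal {K : Type*} [Field K] {n : ℕ} (I : Ideal (MvPolynomial (Fin n) K)) : Prop :=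
  ∃ A : Set (Fin n →₀ ℕ),
    I = Ideal.span ((fun d => (monomial d (1 : K) : MvPolynomial (Fin n) K)) '' A)

/-- The integral closure of a monomial ideal `I`: the ideal generated by all monomials `u`
such that `u ^ m ∈ I ^ m` for some `m ≥ 1`. -/
def intCl {K : Type*} [Field K] {n : ℕ} (I : Ideal (MvPolynomial (Fin n) K)) :
    Ideal (MvPolynomial (Fin n) K) :=
  Ideal.span {u | (∃ d : Fin n →₀ ℕ, u = monomial d (1 : K)) ∧ ∃ m : ℕ, 1 ≤ m ∧ u ^ m ∈ I ^ m}

/-- The set of exponent vectors of monomials belonging to `I`. -/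
def monomialSet {K : Type*} [Field K] {n : ℕ} (I : Ideal (MvPolynomial (Fin n) K)) :
    Set (Fin n →₀ ℕ) :=
  {d | (monomial d (1 : K) : MvPolynomial (Fin n) K) ∈ I}

/-- The set of exponent vectors of the monomials in the Stanley space `a·K[Z]`. -/
def stanleySpace {n : ℕ} (a : Fin n →₀ ℕ) (Z : Finset (Fin n)) : Set (Fin n →₀ ℕ) :=
  {b | (∀ i, a i ≤ b i) ∧ ∀ i ∉ Z, b i = a i}

/-- `D` is a Stanley decomposition of the set of monomials `M`. -/
def IsStanleyDecomp {n : ℕ} (M : Set (Fin n →₀ ℕ))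
    (D : Finset ((Fin n →₀ ℕ) × Finset (Fin n))) : Prop :=
  (∀ p ∈ D, stanleySpace p.1 p.2 ⊆ M) ∧
  (∀ b ∈ M, ∃ p ∈ D, b ∈ stanleySpace p.1 p.2) ∧
  (∀ p ∈ D, ∀ q ∈ D, p ≠ q → Disjoint (stanleySpace p.1 p.2) (stanleySpace q.1 q.2))

/-- Stanley depth of a set of monomials. -/
def sdepthSet {n : ℕ} (M : Set (Fin n →₀ ℕ)) : ℕ :=
  sSup {k | k ≤ n ∧ ∃ D : Finset ((Fin n →₀ ℕ) × Finset (Fin n)),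
    IsStanleyDecomp M D ∧ ∀ p ∈ D, k ≤ p.2.card}

/-- Stanley depth of a monomial ideal `I` (as a module). -/
def sdepthI {K : Type*} [Field K] {n : ℕ} (I : Ideal (MvPolynomial (Fin n) K)) : ℕ :=
  sdepthSet (monomialSet I)

/-- Stanley depth of `S/I` for a monomial ideal `I`. -/
def sdepthQ {K : Type*} [Field K] {n : ℕ} (I : Ideal (MvPolynomial (Fin n) K)) : ℕ :=
  sdepthSet (monomialSet I)ᶜ

/-- Stanley depth of `I/J` for monomial ideals `J ⊆ I`. -/
def sdepthIJ {K : Type*} [Field K] {n : ℕ} (I J : Ideal (MvPolynomial (Fin n) K)) : ℕ :=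
  sdepthSet (monomialSet I \ monomialSet J)

lemma cdiv_le_iff {k : ℕ} (hk : 1 ≤ k) (a b : ℕ) : (a + k - 1) / k ≤ b ↔ a ≤ k * b := by
  rw [Nat.div_le_iff_le_mul_add_pred hk]
  generalize k * b = c
  omega

lemma le_cdiv {k : ℕ} (hk : 1 ≤ k) {a b : ℕ} (h : k * b ≤ a) : b ≤ (a + k - 1) / k := by
  rw [Nat.le_div_iff_mul_le hk, mul_comm]
  omega

/-- Key combinatorial lemma: if membership in `M` corresponds to membership of the `k`-th
multiple in `M'`, then the Stanley depth of `M'` is at most that of `M`. -/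
lemma sdepthSet_le {n : ℕ} {k : ℕ} (hk : 1 ≤ k) (M M' : Set (Fin n →₀ ℕ))
    (h : ∀ b : Fin n →₀ ℕ, b ∈ M ↔ k • b ∈ M') : sdepthSet M' ≤ sdepthSet M := by
  classical
  have h0 : ((0 : ℕ) + k - 1) / k = 0 := by
    rw [Nat.div_eq_of_lt] <;> omega
  set ca : (Fin n →₀ ℕ) → (Fin n →₀ ℕ) := fun a => Finsupp.mapRange (fun x => (x + k - 1) / k) h0 a with hca
  have hcaapp : ∀ (a : Fin n →₀ ℕ) (i : Fin n), ca a i = (a i + k - 1) / k := by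
    intro a i; simp [hca, Finsupp.mapRange_apply]
  -- forward fact
  have F1 : ∀ (a : Fin n →₀ ℕ) (Z : Finset (Fin n)) (b : Fin n →₀ ℕ),
      (∀ i ∉ Z, k ∣ a i) → b ∈ stanleySpace (ca a) Z → k • b ∈ stanleySpace a Z := by
    intro a Z b hdvd ⟨hb1, hb2⟩
    constructor
    · intro i
      have := hb1 i
      rw [hcaapp] at this
      have := (cdiv_le_iff hk (a i) (b i)).mp this
      simpa using this
    · intro i hi
      have hd := hdvd i hi
      have hb := hb2 i hi
      rw [hcaapp] at hb
      obtain ⟨m, hm⟩ := hd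
      have : b i = m := by
        rw [hb, hm]
        have h1 : (k * m + k - 1) / k ≤ m := (cdiv_le_iff hk _ _).mpr le_rfl
        have h2 : m ≤ (k * m + k - 1) / k := le_cdiv hk le_rfl
        omega
      simp only [Finsupp.smul_apply, smul_eq_mul, this, hm]
  have F2 : ∀ (a : Fin n →₀ ℕ) (Z : Finset (Fin n)) (b : Fin n →₀ ℕ),
      k • b ∈ stanleySpace a Z → (∀ i ∉ Z, k ∣ a i) ∧ b ∈ stanleySpace (ca a) Z := by
    intro a Z b ⟨hb1, hb2⟩
    simp only [Finsupp.smul_apply, smul_eq_mul] at hb1 hb2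
    refine ⟨fun i hi => ⟨b i, (hb2 i hi).symm⟩, fun i => ?_, fun i hi => ?_⟩
    · rw [hcaapp]; exact (cdiv_le_iff hk _ _).mpr (hb1 i)
    · rw [hcaapp]
      have hb := hb2 i hi
      have h1 : (a i + k - 1) / k ≤ b i := (cdiv_le_iff hk _ _).mpr (le_of_eq hb.symm)
      have h2 : b i ≤ (a i + k - 1) / k := le_cdiv hk (le_of_eq hb)
      omega
  -- subset of the defining sets
  have hsub : {d | d ≤ n ∧ ∃ D : Finset ((Fin n →₀ ℕ) × Finset (Fin n)),
        IsStanleyDecomp M' D ∧ ∀ p ∈ D, d ≤ p.2.card} ⊆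
      {d | d ≤ n ∧ ∃ D : Finset ((Fin n →₀ ℕ) × Finset (Fin n)),
        IsStanleyDecomp M D ∧ ∀ p ∈ D, d ≤ p.2.card} := by
    rintro d ⟨hdn, D, ⟨hcont, hcov, hdisj⟩, hcard⟩
    refine ⟨hdn, (D.filter (fun p => ∀ i ∉ p.2, k ∣ p.1 i)).image (fun p => (ca p.1, p.2)),
      ⟨?_, ?_, ?_⟩, ?_⟩
    · rintro p' hp' b hb
      simp only [Finset.mem_image, Finset.mem_filter] at hp'
      obtain ⟨p, ⟨hpD, hpdvd⟩, rfl⟩ := hp'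
      have := F1 p.1 p.2 b hpdvd hb
      exact (h b).mpr (hcont p hpD this)
    · intro b hb
      obtain ⟨p, hpD, hpb⟩ := hcov (k • b) ((h b).mp hb)
      obtain ⟨hdvd, hb'⟩ := F2 p.1 p.2 b hpb
      exact ⟨(ca p.1, p.2), Finset.mem_image.mpr ⟨p, Finset.mem_filter.mpr ⟨hpD, hdvd⟩, rfl⟩, hb'⟩
    · rintro p' hp' q' hq' hne
      simp only [Finset.mem_image, Finset.mem_filter] at hp' hq'
      obtain ⟨p, ⟨hpD, hpdvd⟩, rfl⟩ := hp'
      obtain ⟨q, ⟨hqD, hqdvd⟩, rfl⟩ := hq'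
      have hpq : p ≠ q := by rintro rfl; exact hne rfl
      rw [Set.disjoint_left]
      intro b hbp hbq
      have h1 := F1 p.1 p.2 b hpdvd hbp
      have h2 := F1 q.1 q.2 b hqdvd hbq
      exact Set.disjoint_left.mp (hdisj p hpD q hqD hpq) h1 h2
    · intro p' hp'
      simp only [Finset.mem_image, Finset.mem_filter] at hp'
      obtain ⟨p, ⟨hpD, _⟩, rfl⟩ := hp'
      exact hcard p hpD
  -- conclude via sSup
  unfold sdepthSet
  rcases Set.eq_empty_or_nonempty {d | d ≤ n ∧ ∃ D : Finset ((Fin n →₀ ℕ) × Finset (Fin n)),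
        IsStanleyDecomp M' D ∧ ∀ p ∈ D, d ≤ p.2.card} with he | hne
  · rw [he, csSup_empty]; exact Nat.zero_le _
  · exact csSup_le_csSup ⟨n, fun d hd => hd.1⟩ hne hsub

lemma mem_iff_smul_mem {K : Type*} [Field K] {n : ℕ} (I : Ideal (MvPolynomial (Fin n) K))
    (hnormal : ∀ m : ℕ, 1 ≤ m → intCl (I ^ m) = I ^ m) {k : ℕ} (hk : 1 ≤ k)
    (b : Fin n →₀ ℕ) : b ∈ monomialSet I ↔ k • b ∈ monomialSet (I ^ k) := by
  constructor
  · intro hb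
    have : (monomial b (1 : K)) ^ k ∈ I ^ k := Ideal.pow_mem_pow hb k
    rwa [monomial_pow, one_pow] at this
  · intro hb
    have hmem : (monomial b (1 : K)) ∈ intCl I := by
      apply Ideal.subset_span
      refine ⟨⟨b, rfl⟩, k, hk, ?_⟩
      rw [monomial_pow, one_pow]
      exact hb
    have := hnormal 1 le_rfl
    rw [pow_one] at this
    rwa [this] at hmem

theorem stmt8 {K : Type*} [Field K] {n : ℕ} (I : Ideal (MvPolynomial (Fin n) K))
    (hI : IsMonomialIdeal I) (hnormal : ∀ m : ℕ, 1 ≤ m → intCl (I ^ m) = I ^ m)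
    (k : ℕ) (hk : 1 ≤ k) :
    sdepthI (I ^ k) ≤ sdepthI I ∧ sdepthQ (I ^ k) ≤ sdepthQ I := by
  have hiff := mem_iff_smul_mem I hnormal hk
  constructor
  · exact sdepthSet_le hk _ _ hiff
  · exact sdepthSet_le hk _ _ (fun b => by simp only [Set.mem_compl_iff, hiff b])
end
end

section
/- Let $I$ be a normal monomial ideal in $S=\mathbb{K}[x_1,\dots,x_n]$. Then there exists an integer $k\geq 1$ such that $\mathrm{sdepth}(I^k)=\mathrm{sdepth}(I^{sk})$ for every integer $s\geq 1$; likewise there exists $k'\geq 1$ with $\mathrm{sdepth}(S/I^{k'})=\mathrm{sdepth}(S/I^{sk'})$ for all $s\geq 1$. -/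
open MvPolynomial

noncomputable section

lemma aux_ceil_div_le_iff {k a b : ℕ} (hk : 1 ≤ k) : (a + k - 1) / k ≤ b ↔ a ≤ k * b := by
  rw [Nat.div_le_iff_le_mul_add_pred hk]
  omega

lemma aux_off {c ai bi : ℕ} (hc : 1 ≤ c) (hd : c ∣ ai) : bi = ai / c ↔ c * bi = ai := by
  obtain ⟨t, rfl⟩ := hd
  rw [Nat.mul_div_cancel_left t hc]
  exact ⟨fun h => by rw [h], fun h => Nat.eq_of_mul_eq_mul_left hc h⟩

lemma aux_sdepthSet_le {n : ℕ} {M M' : Set (Fin n →₀ ℕ)} {c : ℕ} (hc : 1 ≤ c)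
    (h : ∀ b, b ∈ M ↔ c • b ∈ M') : sdepthSet M' ≤ sdepthSet M := by
  classical
  have hsub : {k | k ≤ n ∧ ∃ D : Finset ((Fin n →₀ ℕ) × Finset (Fin n)),
        IsStanleyDecomp M' D ∧ ∀ p ∈ D, k ≤ p.2.card}
      ⊆ {k | k ≤ n ∧ ∃ D : Finset ((Fin n →₀ ℕ) × Finset (Fin n)),
        IsStanleyDecomp M D ∧ ∀ p ∈ D, k ≤ p.2.card} := by
    rintro κ ⟨hκn, D, ⟨hDsub, hDcov, hDdisj⟩, hDcard⟩
    refine ⟨hκn, ?_⟩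
    set phi : (Fin n →₀ ℕ) × Finset (Fin n) → (Fin n →₀ ℕ) × Finset (Fin n) :=
      fun p => (Finsupp.equivFunOnFinite.symm
        (fun i => if i ∈ p.2 then (p.1 i + c - 1) / c else p.1 i / c), p.2) with hphi
    have key : ∀ p : (Fin n →₀ ℕ) × Finset (Fin n), (∀ i ∉ p.2, c ∣ p.1 i) →
        ∀ b, b ∈ stanleySpace (phi p).1 (phi p).2 ↔ c • b ∈ stanleySpace p.1 p.2 := by
      rintro ⟨a, Z⟩ hdvd b
      simp only [stanleySpace, hphi, Set.mem_setOf_eq,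
        Finsupp.coe_equivFunOnFinite_symm, Finsupp.smul_apply, smul_eq_mul]
      constructor
      · rintro ⟨h1, h2⟩
        constructor
        · intro i
          by_cases hi : i ∈ Z
          · have := h1 i
            simp only [hi, if_true] at this
            exact (aux_ceil_div_le_iff hc).1 this
          · have h2' := h2 i hi
            simp only [hi, if_false] at h2'
            exact ((aux_off hc (hdvd i hi)).1 h2').ge
        · intro i hi
          have h2' := h2 i hi
          simp only [hi, if_false] at h2'
          exact (aux_off hc (hdvd i hi)).1 h2'
      · rintro ⟨h1, h2⟩
        constructor
        · intro i
          by_cases hi : i ∈ Z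
          · simp only [hi, if_true]
            exact (aux_ceil_div_le_iff hc).2 (h1 i)
          · simp only [hi, if_false]
            exact ((aux_off hc (hdvd i hi)).2 (h2 i hi)).ge
        · intro i hi
          simp only [hi, if_false]
          exact (aux_off hc (hdvd i hi)).2 (h2 i hi)
    set Dg : Finset ((Fin n →₀ ℕ) × Finset (Fin n)) :=
      D.filter (fun p => ∀ i ∉ p.2, c ∣ p.1 i) with hDg
    refine ⟨Dg.image phi, ⟨?_, ?_, ?_⟩, ?_⟩
    · intro p' hp'
      obtain ⟨p, hp, rfl⟩ := Finset.mem_image.1 hp'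
      obtain ⟨hpD, hpdvd⟩ := Finset.mem_filter.1 hp
      intro b hb
      have hcb : c • b ∈ stanleySpace p.1 p.2 := (key p hpdvd b).1 hb
      exact (h b).2 (hDsub p hpD hcb)
    · intro b hb
      have hcb : c • b ∈ M' := (h b).1 hb
      obtain ⟨p, hpD, hmem⟩ := hDcov _ hcb
      have hpdvd : ∀ i ∉ p.2, c ∣ p.1 i := by
        intro i hi
        have := hmem.2 i hi
        simp only [Finsupp.smul_apply, smul_eq_mul] at this
        exact ⟨b i, this.symm⟩
      exact ⟨phi p, Finset.mem_image.2 ⟨p, Finset.mem_filter.2 ⟨hpD, hpdvd⟩, rfl⟩,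
        (key p hpdvd b).2 hmem⟩
    · intro p' hp' q' hq' hne
      obtain ⟨p, hp, rfl⟩ := Finset.mem_image.1 hp'
      obtain ⟨q, hq, rfl⟩ := Finset.mem_image.1 hq'
      obtain ⟨hpD, hpdvd⟩ := Finset.mem_filter.1 hp
      obtain ⟨hqD, hqdvd⟩ := Finset.mem_filter.1 hq
      have hpq : p ≠ q := fun hpq => hne (by rw [hpq])
      rw [Set.disjoint_left]
      intro b hbp hbq
      exact Set.disjoint_left.1 (hDdisj p hpD q hqD hpq)
        ((key p hpdvd b).1 hbp) ((key q hqdvd b).1 hbq)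
    · intro p' hp'
      obtain ⟨p, hp, rfl⟩ := Finset.mem_image.1 hp'
      exact hDcard p (Finset.mem_filter.1 hp).1
  by_cases hne : {k | k ≤ n ∧ ∃ D : Finset ((Fin n →₀ ℕ) × Finset (Fin n)),
      IsStanleyDecomp M' D ∧ ∀ p ∈ D, k ≤ p.2.card}.Nonempty
  · exact csSup_le_csSup ⟨n, fun x hx => hx.1⟩ hne hsub
  · rw [sdepthSet, Set.not_nonempty_iff_eq_empty.1 hne, csSup_empty]
    exact bot_le

lemma aux_monomial_iff {K : Type*} [Field K] {n : ℕ}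
    (I : Ideal (MvPolynomial (Fin n) K))
    (hnormal : ∀ m : ℕ, 1 ≤ m → intCl (I ^ m) = I ^ m)
    (k s : ℕ) (hk : 1 ≤ k) (hs : 1 ≤ s) (b : Fin n →₀ ℕ) :
    b ∈ monomialSet (I ^ k) ↔ s • b ∈ monomialSet (I ^ (s * k)) := by
  have hpow : (I ^ k) ^ s = I ^ (s * k) := by rw [← pow_mul, mul_comm]
  have hmono : (monomial b (1 : K)) ^ s = monomial (s • b) 1 := by
    rw [monomial_pow, one_pow]
  constructor
  · intro hb
    rw [monomialSet, Set.mem_setOf_eq, ← hpow, ← hmono]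
    exact Ideal.pow_mem_pow hb s
  · intro hb
    have hmem : monomial b (1 : K) ∈ intCl (I ^ k) := by
      apply Ideal.subset_span
      refine ⟨⟨b, rfl⟩, s, hs, ?_⟩
      rw [hmono, hpow]
      exact hb
    rwa [hnormal k hk] at hmem

theorem stmt11 {K : Type*} [Field K] {n : ℕ} (I : Ideal (MvPolynomial (Fin n) K))
    (hI : IsMonomialIdeal I) (hnormal : ∀ m : ℕ, 1 ≤ m → intCl (I ^ m) = I ^ m) :
    (∃ k : ℕ, 1 ≤ k ∧ ∀ s : ℕ, 1 ≤ s → sdepthI (I ^ k) = sdepthI (I ^ (s * k))) ∧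
    (∃ k' : ℕ, 1 ≤ k' ∧ ∀ s : ℕ, 1 ≤ s → sdepthQ (I ^ k') = sdepthQ (I ^ (s * k'))) := by
  constructor
  · have hT : {m : ℕ | ∃ k, 1 ≤ k ∧ sdepthI (I ^ k) = m}.Nonempty :=
      ⟨sdepthI (I ^ 1), 1, le_refl 1, rfl⟩
    obtain ⟨k, hk1, hk⟩ := Nat.sInf_mem hT
    refine ⟨k, hk1, fun s hs => ?_⟩
    have h1 : sdepthI (I ^ (s * k)) ≤ sdepthI (I ^ k) :=
      aux_sdepthSet_le hs (aux_monomial_iff I hnormal k s hk1 hs)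
    have h2 : sInf {m : ℕ | ∃ k, 1 ≤ k ∧ sdepthI (I ^ k) = m} ≤ sdepthI (I ^ (s * k)) :=
      Nat.sInf_le ⟨s * k, Nat.mul_le_mul hs hk1, rfl⟩
    omega
  · have hT : {m : ℕ | ∃ k, 1 ≤ k ∧ sdepthQ (I ^ k) = m}.Nonempty :=
      ⟨sdepthQ (I ^ 1), 1, le_refl 1, rfl⟩
    obtain ⟨k, hk1, hk⟩ := Nat.sInf_mem hT
    refine ⟨k, hk1, fun s hs => ?_⟩
    have h1 : sdepthQ (I ^ (s * k)) ≤ sdepthQ (I ^ k) := by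
      apply aux_sdepthSet_le hs
      intro b
      rw [Set.mem_compl_iff, Set.mem_compl_iff]
      exact not_congr (aux_monomial_iff I hnormal k s hk1 hs b)
    have h2 : sInf {m : ℕ | ∃ k, 1 ≤ k ∧ sdepthQ (I ^ k) = m} ≤ sdepthQ (I ^ (s * k)) :=
      Nat.sInf_le ⟨s * k, Nat.mul_le_mul hs hk1, rfl⟩
    omega
end
end
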